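/- Let m ≥ 2 be an integer, α ∈ (0,1) real, and μ a finite nonzero Borel measure on T = {0,1,...,m-1}^ℕ such that for μ-a.e. x the upper α-density Θ^{α,*}(μ,x) is finite and the lower α-density Θ_{α,*}(μ,x) is positive. Then the essential supremum over x of Θ^{α,*}(μ,x)/Θ_{α,*}(μ,x) is at least max(m^α/⌊m^α⌋, ⌈m^α⌉/m^α). -/

import Mathlib

open MeasureTheory Filter Set ENNReal

open Topology

open Classical in
noncomputable def tdist {m : ℕ} (a b : ℕ → Fin m) : ℝ :=
  if h : ∃ n, a n ≠ b n then (m : ℝ) ^ (-(Nat.find h : ℤ)) else 0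

def cyl {m : ℕ} (n : ℕ) (x : ℕ → Fin m) : Set (ℕ → Fin m) :=
  {y | ∀ i < n, y i = x i}

def msupp {m : ℕ} (μ : Measure (ℕ → Fin m)) : Set (ℕ → Fin m) :=
  {x | ∀ n : ℕ, 0 < μ (cyl n x)}

noncomputable def fdens {m : ℕ} (μ : Measure (ℕ → Fin m)) (α : ℝ) (n : ℕ)
    (x : ℕ → Fin m) : ℝ :=
  (m : ℝ) ^ (α * n) * (μ (cyl n x)).toReal

noncomputable def thetaUpper {m : ℕ} (μ : Measure (ℕ → Fin m)) (α : ℝ)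
    (x : ℕ → Fin m) : ℝ≥0∞ :=
  Filter.limsup (fun n : ℕ => ENNReal.ofReal ((m : ℝ) ^ (α * n)) * μ (cyl n x)) atTop

noncomputable def thetaLower {m : ℕ} (μ : Measure (ℕ → Fin m)) (α : ℝ)
    (x : ℕ → Fin m) : ℝ≥0∞ :=
  Filter.liminf (fun n : ℕ => ENNReal.ofReal ((m : ℝ) ^ (α * n)) * μ (cyl n x)) atTop

namespace CylAux

variable {m : ℕ}

lemma mem_cyl_self (n : ℕ) (x : ℕ → Fin m) : x ∈ cyl n x := fun _ _ => rfl

lemma cyl_zero (x : ℕ → Fin m) : cyl 0 x = univ := by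
  ext y; simp [cyl]

lemma cyl_anti {n k : ℕ} (h : n ≤ k) (x : ℕ → Fin m) : cyl k x ⊆ cyl n x :=
  fun y hy i hi => hy i (lt_of_lt_of_le hi h)

lemma cyl_eq_of_mem {n : ℕ} {x y : ℕ → Fin m} (h : y ∈ cyl n x) : cyl n y = cyl n x := by
  ext z; constructor <;> intro hz i hi
  · exact (hz i hi).trans (h i hi)
  · exact (hz i hi).trans (h i hi).symm

/-- cylinder as preimage of a point under projection to first n coordinates -/
def proj (n : ℕ) (x : ℕ → Fin m) : Fin n → Fin m := fun i => x i

lemma measurable_proj (n : ℕ) : Measurable (proj (m := m) n) := by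
  apply measurable_pi_lambda
  intro i
  exact measurable_pi_apply _

lemma cyl_eq_preimage (n : ℕ) (x : ℕ → Fin m) :
    cyl n x = proj n ⁻¹' {proj n x} := by
  ext y
  simp only [mem_preimage, mem_singleton_iff, funext_iff, cyl, mem_setOf_eq, proj]
  constructor
  · intro h i; exact h i i.isLt
  · intro h i hi; exact h ⟨i, hi⟩

lemma measurableSet_cyl (n : ℕ) (x : ℕ → Fin m) : MeasurableSet (cyl n x) := by
  rw [cyl_eq_preimage]
  exact measurable_proj n (measurableSet_singleton _)

lemma isOpen_cyl (n : ℕ) (x : ℕ → Fin m) : IsOpen (cyl n x) := by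
  rw [cyl_eq_preimage]
  have hc : Continuous (proj (m := m) n) := continuous_pi fun i => continuous_apply (i : ℕ)
  exact hc.isOpen_preimage _ (isOpen_discrete _)

/-- cylinders shrink to points: any open set containing x contains a cylinder -/
lemma exists_cyl_subset {U : Set (ℕ → Fin m)} (hU : IsOpen U) {x : ℕ → Fin m}
    (hx : x ∈ U) : ∃ n, cyl n x ⊆ U := by
  have hnhds : U ∈ nhds x := hU.mem_nhds hx
  rw [nhds_pi, Filter.mem_pi] at hnhds
  obtain ⟨I, hI, V, hV, hsub⟩ := hnhds
  obtain ⟨n, hn⟩ := hI.bddAbove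
  refine ⟨n + 1, fun y hy => hsub ?_⟩
  intro i hi
  have : y i = x i := hy i (Nat.lt_succ_of_le (hn hi))
  rw [this]
  exact mem_of_mem_nhds (hV i)


/-- strings indexing cylinders -/
def Str (m : ℕ) := Σ n : ℕ, Fin n → Fin m

instance : Countable (Str m) := by unfold Str; infer_instance

def cylW (p : Str m) : Set (ℕ → Fin m) := proj p.1 ⁻¹' {p.2}

lemma cylW_eq_cyl {p : Str m} {x : ℕ → Fin m} (hx : x ∈ cylW p) :
    cylW p = cyl p.1 x := by
  have : proj p.1 x = p.2 := hx
  rw [cyl_eq_preimage, cylW, this]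

lemma measurableSet_cylW (p : Str m) : MeasurableSet (cylW p) :=
  measurable_proj p.1 (measurableSet_singleton _)

lemma cylW_subset_of_le {p p' : Str m} {x : ℕ → Fin m} (hx : x ∈ cylW p)
    (hx' : x ∈ cylW p') (hle : p'.1 ≤ p.1) : cylW p ⊆ cylW p' := by
  rw [cylW_eq_cyl hx, cylW_eq_cyl hx']
  exact cyl_anti hle x

lemma cylW_eq_of_eq_len {p p' : Str m} {x : ℕ → Fin m} (hx : x ∈ cylW p)
    (hx' : x ∈ cylW p') (hlen : p.1 = p'.1) : p = p' := by
  obtain ⟨n, w⟩ := p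
  obtain ⟨n', w'⟩ := p'
  simp only at hlen
  subst hlen
  have h1 : proj n x = w := hx
  have h2 : proj n x = w' := hx'
  simp [h1.symm.trans h2]
  rfl

lemma measurable_measure_cyl_aux (μ : Measure (ℕ → Fin m)) (n : ℕ)
    (S : Set (ℕ → Fin m)) :
    Measurable fun x => μ (cyl n x ∩ S) := by
  have : (fun x => μ (cyl n x ∩ S)) =
      (fun w : Fin n → Fin m => μ (proj n ⁻¹' {w} ∩ S)) ∘ proj n := by
    funext x; simp [cyl_eq_preimage]
  rw [this]
  exact (measurable_of_countable _).comp (measurable_proj n)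

lemma measurable_measure_cyl (μ : Measure (ℕ → Fin m)) (n : ℕ) :
    Measurable fun x => μ (cyl n x) := by
  have := measurable_measure_cyl_aux μ n univ
  simpa using this

lemma measurable_measure_cyl_diff (μ : Measure (ℕ → Fin m)) (n : ℕ)
    (S : Set (ℕ → Fin m)) :
    Measurable fun x => μ (cyl n x \ S) :=
  measurable_measure_cyl_aux μ n Sᶜ


def strOf (n : ℕ) (x : ℕ → Fin m) : Str m := ⟨n, proj n x⟩

lemma cylW_strOf (n : ℕ) (x : ℕ → Fin m) : cylW (strOf n x) = cyl n x :=
  (cyl_eq_preimage n x).symm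

/-- The density theorem for cylinders. -/
lemma density (μ : Measure (ℕ → Fin m)) [IsFiniteMeasure μ] {G : Set (ℕ → Fin m)}
    (hG : MeasurableSet G) {δ : ℝ≥0∞} (hδ : 0 < δ) :
    μ {x | x ∈ G ∧ ∃ᶠ n in atTop, δ * μ (cyl n x) < μ (cyl n x \ G)} = 0 := by
  set E := {x | x ∈ G ∧ ∃ᶠ n in atTop, δ * μ (cyl n x) < μ (cyl n x \ G)} with hE
  have hfreq : {x | ∃ᶠ n in atTop, δ * μ (cyl n x) < μ (cyl n x \ G)} =
      ⋂ N, ⋃ n, ⋃ _ : N ≤ n, {x | δ * μ (cyl n x) < μ (cyl n x \ G)} := by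
    ext x
    simp [frequently_atTop]
  have hEmeas : MeasurableSet E := by
    have h2 : E = G ∩ {x | ∃ᶠ n in atTop, δ * μ (cyl n x) < μ (cyl n x \ G)} := rfl
    rw [h2, hfreq]
    apply hG.inter
    refine MeasurableSet.iInter fun N => MeasurableSet.iUnion fun n =>
      MeasurableSet.iUnion fun _ => ?_
    exact measurableSet_lt ((measurable_measure_cyl μ n).const_mul δ)
      (measurable_measure_cyl_diff μ n G)
  -- it suffices to show δ * μ E ≤ ε for all ε > 0
  have key : ∀ ε : ℝ≥0∞, 0 < ε → δ * μ E ≤ ε := by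
    intro ε hε
    obtain ⟨U, hEU, hUopen, hUlt⟩ :=
      E.exists_isOpen_lt_add (measure_ne_top μ E) hε.ne'
    set W : Set (Str m) :=
      {p | cylW p ⊆ U ∧ δ * μ (cylW p) < μ (cylW p \ G)} with hW
    set W₀ : Set (Str m) :=
      {p | p ∈ W ∧ ∀ p' ∈ W, p'.1 < p.1 → ¬(cylW p ⊆ cylW p')} with hW₀
    -- covering property
    have hcover : ∀ x ∈ E, ∃ p ∈ W₀, x ∈ cylW p := by
      intro x hx
      classical
      obtain ⟨n₁, hn₁⟩ := exists_cyl_subset hUopen (hEU hx)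
      obtain ⟨hxG, hxfreq⟩ := hx
      have hne : ∃ n, strOf n x ∈ W := by
        obtain ⟨n, hn, hprop⟩ := (frequently_atTop.mp hxfreq) n₁
        refine ⟨n, ?_, ?_⟩
        · rw [cylW_strOf]
          exact (cyl_anti hn x).trans hn₁
        · rw [cylW_strOf]
          exact hprop
      set n₀ := Nat.find hne with hn₀
      have hxmem : x ∈ cylW (strOf n₀ x) := by
        rw [cylW_strOf]; exact mem_cyl_self n₀ x
      refine ⟨strOf n₀ x, ⟨Nat.find_spec hne, ?_⟩, hxmem⟩
      intro p' hp' hlt hsub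
      have hxp' : x ∈ cylW p' := hsub hxmem
      have : strOf p'.1 x ∈ W := by
        have heq : cylW (strOf p'.1 x) = cylW p' := by
          rw [cylW_strOf, cylW_eq_cyl hxp']
        rw [hW, mem_setOf_eq, heq]
        exact hp'
      exact Nat.find_min hne hlt this
    -- disjointness
    have hdisj : W₀.PairwiseDisjoint cylW := by
      intro p hp p' hp' hne
      rw [Function.onFun]
      by_contra hnd
      obtain ⟨z, hz, hz'⟩ := Set.not_disjoint_iff.mp hnd
      rcases le_or_gt p.1 p'.1 with hle | hlt
      · rcases eq_or_lt_of_le hle with heq | hlt'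
        · exact hne (cylW_eq_of_eq_len hz hz' heq)
        · exact hp'.2 p hp.1 hlt' (cylW_subset_of_le hz' hz hlt'.le)
      · exact hp.2 p' hp'.1 hlt (cylW_subset_of_le hz hz' hlt.le)
    have hcountW₀ : W₀.Countable := W₀.to_countable
    -- total mass of the covering cylinders
    have hsubU : (⋃ p ∈ W₀, cylW p) ⊆ U := by
      refine iUnion₂_subset fun p hp => hp.1.1
    have hSig : μ (⋃ p ∈ W₀, cylW p) = ∑' p : W₀, μ (cylW p) :=
      measure_biUnion hcountW₀ hdisj fun p _ => measurableSet_cylW p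
    have hEsub : E ⊆ ⋃ p ∈ W₀, cylW p := by
      intro x hx
      obtain ⟨p, hp, hxp⟩ := hcover x hx
      exact mem_biUnion hp hxp
    have hμE_le : μ E ≤ ∑' p : W₀, μ (E ∩ cylW p) := by
      calc μ E ≤ μ (⋃ p ∈ W₀, E ∩ cylW p) := by
              apply measure_mono
              intro x hx
              obtain ⟨p, hp, hxp⟩ := hcover x hx
              exact mem_biUnion hp ⟨hx, hxp⟩
        _ ≤ ∑' p : W₀, μ (E ∩ cylW p) := measure_biUnion_le μ hcountW₀ _
    -- per-cylinder estimate
    have hper : ∀ p : W₀, μ (E ∩ cylW (p : Str m)) + δ * μ (cylW (p : Str m))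
        ≤ μ (cylW (p : Str m)) := by
      rintro ⟨p, hp⟩
      have h1 : μ (E ∩ cylW p) ≤ μ (cylW p ∩ G) := by
        apply measure_mono
        intro x hx
        exact ⟨hx.2, hx.1.1⟩
      have h2 : μ (cylW p ∩ G) + μ (cylW p \ G) = μ (cylW p) :=
        measure_inter_add_diff (cylW p) hG
      calc μ (E ∩ cylW p) + δ * μ (cylW p)
          ≤ μ (cylW p ∩ G) + μ (cylW p \ G) := add_le_add h1 hp.1.2.le
        _ = μ (cylW p) := h2
    have hsum : μ E + δ * (∑' p : W₀, μ (cylW (p : Str m)))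
        ≤ ∑' p : W₀, μ (cylW (p : Str m)) := by
      calc μ E + δ * (∑' p : W₀, μ (cylW (p : Str m)))
          = μ E + ∑' p : W₀, δ * μ (cylW (p : Str m)) := by rw [ENNReal.tsum_mul_left]
        _ ≤ (∑' p : W₀, μ (E ∩ cylW (p : Str m)))
            + ∑' p : W₀, δ * μ (cylW (p : Str m)) := add_le_add hμE_le le_rfl
        _ = ∑' p : W₀, (μ (E ∩ cylW (p : Str m)) + δ * μ (cylW (p : Str m))) :=
            (ENNReal.tsum_add).symm
        _ ≤ ∑' p : W₀, μ (cylW (p : Str m)) := ENNReal.tsum_le_tsum hper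
    have hSigU : (∑' p : W₀, μ (cylW (p : Str m))) ≤ μ U := by
      rw [← hSig]
      exact measure_mono hsubU
    have hfin : (∑' p : W₀, μ (cylW (p : Str m))) < μ E + ε := lt_of_le_of_lt hSigU hUlt
    have hcancel : δ * (∑' p : W₀, μ (cylW (p : Str m))) ≤ ε := by
      have h3 : μ E + δ * (∑' p : W₀, μ (cylW (p : Str m))) ≤ μ E + ε :=
        hsum.trans hfin.le
      exact (ENNReal.add_le_add_iff_left (measure_ne_top μ E)).mp h3
    have hEle : μ E ≤ ∑' p : W₀, μ (cylW (p : Str m)) := by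
      calc μ E ≤ μ (⋃ p ∈ W₀, cylW p) := measure_mono hEsub
        _ = _ := hSig
    calc δ * μ E ≤ δ * (∑' p : W₀, μ (cylW (p : Str m))) := mul_le_mul_right hEle δ
      _ ≤ ε := hcancel
  by_contra h
  have hpos : 0 < δ * μ E := ENNReal.mul_pos hδ.ne' h
  rcases ENNReal.lt_iff_exists_real_btwn.mp hpos with ⟨r, hr0, hr1, hr2⟩
  exact absurd (key _ hr1) (not_le.mpr hr2)


/-- the j-th child point of the level-n cylinder of x -/
def child (x : ℕ → Fin m) (n : ℕ) (j : Fin m) : ℕ → Fin m :=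
  fun i => if i = n then j else x i

lemma mem_child_iff {x y : ℕ → Fin m} {n : ℕ} {j : Fin m} :
    y ∈ cyl (n + 1) (child x n j) ↔ y ∈ cyl n x ∧ y n = j := by
  constructor
  · intro h
    refine ⟨fun i hi => ?_, ?_⟩
    · have := h i (Nat.lt_succ_of_lt hi)
      rwa [child, if_neg hi.ne] at this
    · have := h n (Nat.lt_succ_self n)
      rwa [child, if_pos rfl] at this
  · rintro ⟨h1, h2⟩ i hi
    rcases Nat.lt_succ_iff_lt_or_eq.mp hi with hi' | rfl
    · rw [child, if_neg hi'.ne]; exact h1 i hi'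
    · rw [child, if_pos rfl]; exact h2

lemma child_subset {x : ℕ → Fin m} {n : ℕ} {j : Fin m} :
    cyl (n + 1) (child x n j) ⊆ cyl n x := fun _ h => (mem_child_iff.mp h).1

lemma cyl_eq_iUnion_child (x : ℕ → Fin m) (n : ℕ) :
    cyl n x = ⋃ j : Fin m, cyl (n + 1) (child x n j) := by
  ext y
  simp only [mem_iUnion]
  constructor
  · intro h; exact ⟨y n, mem_child_iff.mpr ⟨h, rfl⟩⟩
  · rintro ⟨j, hj⟩; exact (mem_child_iff.mp hj).1

lemma measure_cyl_eq_sum (μ : Measure (ℕ → Fin m)) (x : ℕ → Fin m) (n : ℕ) :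
    μ (cyl n x) = ∑ j : Fin m, μ (cyl (n + 1) (child x n j)) := by
  rw [cyl_eq_iUnion_child x n, measure_iUnion ?_ fun j => measurableSet_cyl _ _,
    tsum_fintype]
  intro j j' hne
  simp only [Function.onFun, Set.disjoint_left]
  intro y hy hy'
  exact hne ((mem_child_iff.mp hy).2.symm.trans (mem_child_iff.mp hy').2)


set_option maxHeartbeats 2000000 in
lemma engine (m : ℕ) (hm : 2 ≤ m) (α : ℝ) (hα : α ∈ Set.Ioo (0:ℝ) 1)
    (μ : Measure (ℕ → Fin m)) [IsFiniteMeasure μ] (hμ : μ ≠ 0)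
    (hae : ∀ᵐ x ∂μ, thetaUpper μ α x < ⊤ ∧ 0 < thetaLower μ α x)
    {q δ : ℝ} (hq : 1 < q) (hδ : 0 < δ) (hδ1 : (m:ℝ) * δ < 1) :
    ∃ a b : ℝ, 0 < a ∧ 0 < b ∧
      ENNReal.ofReal (b / (q * a)) ≤
        essSup (fun x => thetaUpper μ α x / thetaLower μ α x) μ ∧
      ∃ k₁ k₂ : ℕ,
        (k₁:ℝ) * (a / q) ≤ (m:ℝ)^α * (q^2 * a) ∧
        a / q * (1 - m * δ) ≤ (k₁:ℝ) * (q^2 * b) / (m:ℝ)^α ∧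
        b / q * (1 - m * δ) ≤ (k₂:ℝ) * (q^2 * b) / (m:ℝ)^α ∧
        (k₂:ℝ) * (a / q) ≤ (m:ℝ)^α * (q^2 * b) := by
  classical
  obtain ⟨hα0, hα1⟩ := hα
  have hm1 : (1:ℝ) < m := by
    have : (2:ℝ) ≤ m := by exact_mod_cast hm
    linarith
  set β := (m:ℝ) ^ α with hβdef
  have hβ1 : 1 < β := Real.one_lt_rpow_iff_of_pos (by linarith) |>.mpr (Or.inl ⟨hm1, hα0⟩)
  have hβ0 : 0 < β := lt_trans one_pos hβ1
  have hq0 : 0 < q := lt_trans one_pos hq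
  have hmδ : 0 ≤ 1 - (m:ℝ) * δ := by linarith
  have hpow : ∀ n : ℕ, (m:ℝ) ^ (α * (n:ℝ)) = β ^ n := by
    intro n
    rw [hβdef, ← Real.rpow_natCast ((m:ℝ)^α) n, ← Real.rpow_mul (by linarith : (0:ℝ) ≤ m)]
  set f : ℕ → (ℕ → Fin m) → ℝ≥0∞ :=
    fun n x => ENNReal.ofReal ((m:ℝ) ^ (α * (n:ℝ))) * μ (cyl n x) with hfdef
  have hθU : ∀ x, thetaUpper μ α x = limsup (fun n => f n x) atTop := fun _ => rfl
  have hθL : ∀ x, thetaLower μ α x = liminf (fun n => f n x) atTop := fun _ => rfl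
  have hf_eq : ∀ n x, f n x = ENNReal.ofReal (β ^ n * (μ (cyl n x)).toReal) := by
    intro n x
    rw [hfdef]
    simp only
    rw [hpow n, ← ENNReal.ofReal_toReal (measure_ne_top μ (cyl n x)),
      ← ENNReal.ofReal_mul (by positivity)]
    rw [ENNReal.ofReal_toReal (measure_ne_top μ (cyl n x))]
  -- conversion helpers
  have hflt : ∀ {c : ℝ} {n : ℕ} {x}, f n x < ENNReal.ofReal c →
      β ^ n * (μ (cyl n x)).toReal < c := by
    intro c n x h
    rw [hf_eq] at h
    exact (ENNReal.ofReal_lt_ofReal_iff_of_nonneg (by positivity)).mp h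
  have hfgt : ∀ {c : ℝ} {n : ℕ} {x}, 0 ≤ c → ENNReal.ofReal c < f n x →
      c < β ^ n * (μ (cyl n x)).toReal := by
    intro c n x hc h
    rw [hf_eq] at h
    exact (ENNReal.ofReal_lt_ofReal_iff_of_nonneg hc).mp h
  set L := essSup (fun x => thetaUpper μ α x / thetaLower μ α x) μ with hL
  have haeL : ∀ᵐ x ∂μ, thetaUpper μ α x / thetaLower μ α x ≤ L := ENNReal.ae_le_essSup _
  have haeΩ : ∀ᵐ x ∂μ, thetaUpper μ α x < ⊤ ∧ 0 < thetaLower μ α x ∧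
      thetaUpper μ α x ≤ L * thetaLower μ α x := by
    filter_upwards [hae, haeL] with x h1 h2
    have hle : thetaLower μ α x ≤ thetaUpper μ α x := by
      rw [hθU, hθL]; exact liminf_le_limsup
    refine ⟨h1.1, h1.2, ?_⟩
    exact (ENNReal.div_le_iff h1.2.ne' (lt_of_le_of_lt hle h1.1).ne).mp h2
  set Ω := {x | thetaUpper μ α x < ⊤ ∧ 0 < thetaLower μ α x ∧
      thetaUpper μ α x ≤ L * thetaLower μ α x} with hΩdef
  have hΩc : μ Ωᶜ = 0 := by
    have h := ae_iff.mp haeΩ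
    simpa only [hΩdef, compl_setOf] using h
  -- pigeonhole on scales
  set A : ℤ → ℤ → Set (ℕ → Fin m) := fun i j => Ω ∩
    {x | (thetaLower μ α x).toReal ∈ Set.Ico (q ^ i) (q ^ (i+1)) ∧
         (thetaUpper μ α x).toReal ∈ Set.Ico (q ^ j) (q ^ (j+1))} with hAdef
  have hΩbounds : ∀ x ∈ Ω, thetaLower μ α x ≠ ⊤ ∧ thetaUpper μ α x ≠ ⊤ ∧
      0 < (thetaLower μ α x).toReal ∧ 0 < (thetaUpper μ α x).toReal := by
    intro x hx
    obtain ⟨h1, h2, _⟩ := hx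
    have hle : thetaLower μ α x ≤ thetaUpper μ α x := by
      rw [hθU, hθL]; exact liminf_le_limsup
    have hlt : thetaLower μ α x ≠ ⊤ := (lt_of_le_of_lt hle h1).ne
    refine ⟨hlt, h1.ne, ENNReal.toReal_pos h2.ne' hlt, ENNReal.toReal_pos ?_ h1.ne⟩
    exact (lt_of_lt_of_le h2 hle).ne'
  have hcover : Ω ⊆ ⋃ i : ℤ, ⋃ j : ℤ, A i j := by
    intro x hx
    obtain ⟨_, _, hs, hS⟩ := hΩbounds x hx
    obtain ⟨i, hi⟩ := exists_mem_Ico_zpow hs hq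
    obtain ⟨j, hj⟩ := exists_mem_Ico_zpow hS hq
    exact mem_iUnion.mpr ⟨i, mem_iUnion.mpr ⟨j, hx, hi, hj⟩⟩
  have hpos : ∃ i j : ℤ, μ (A i j) ≠ 0 := by
    by_contra h
    push_neg at h
    have h1 : μ (⋃ i : ℤ, ⋃ j : ℤ, A i j) = 0 := by
      apply measure_iUnion_null
      intro i
      apply measure_iUnion_null
      intro j
      exact h i j
    have h2 : μ Set.univ = 0 := by
      have hsub : (Set.univ : Set (ℕ → Fin m)) ⊆ (⋃ i : ℤ, ⋃ j : ℤ, A i j) ∪ Ωᶜ := by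
        intro x _
        by_cases hx : x ∈ Ω
        · exact Or.inl (hcover hx)
        · exact Or.inr hx
      have := (measure_mono hsub).trans (measure_union_le (μ := μ) _ _)
      rw [h1, hΩc] at this
      simpa using this
    exact hμ (Measure.measure_univ_eq_zero.mp h2)
  obtain ⟨i, j, hApos⟩ := hpos
  set a := q ^ i with hadef
  set b := q ^ j with hbdef
  have ha : 0 < a := zpow_pos hq0 i
  have hb : 0 < b := zpow_pos hq0 j
  have hqa : q ^ (i+1) = a * q := by rw [hadef, zpow_add_one₀ hq0.ne']
  have hqb : q ^ (j+1) = b * q := by rw [hbdef, zpow_add_one₀ hq0.ne']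
  -- uniformization (Egorov-style)
  set cA : ℕ → Set (ℕ → Fin m) := fun N =>
    {x | ∀ k, N ≤ k → ENNReal.ofReal (a/q) < f k x ∧ f k x < ENNReal.ofReal (q^2*b)}
    with hcAdef
  have hwindow : ∀ x ∈ A i j, ∃ N, x ∈ cA N := by
    intro x hx
    obtain ⟨hxΩ, ⟨hs1, hs2⟩, ⟨hS1, hS2⟩⟩ := hx
    obtain ⟨hsnt, hSnt, _, _⟩ := hΩbounds x hxΩ
    have hlo : ENNReal.ofReal (a/q) < liminf (fun n => f n x) atTop := by
      rw [← hθL]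
      calc ENNReal.ofReal (a/q) < ENNReal.ofReal a := by
            apply ENNReal.ofReal_lt_ofReal_iff ha |>.mpr
            rw [div_lt_iff₀ hq0]
            nlinarith
        _ ≤ ENNReal.ofReal (thetaLower μ α x).toReal := ENNReal.ofReal_le_ofReal hs1
        _ = thetaLower μ α x := ENNReal.ofReal_toReal hsnt
    have hhi : limsup (fun n => f n x) atTop < ENNReal.ofReal (q^2*b) := by
      rw [← hθU]
      calc thetaUpper μ α x = ENNReal.ofReal (thetaUpper μ α x).toReal :=
            (ENNReal.ofReal_toReal hSnt).symm
        _ < ENNReal.ofReal (q^2*b) := by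
            apply ENNReal.ofReal_lt_ofReal_iff (by positivity) |>.mpr
            rw [hqb] at hS2
            nlinarith
    have hev1 : ∀ᶠ n in atTop, ENNReal.ofReal (a/q) < f n x :=
      eventually_lt_of_lt_liminf hlo
    have hev2 : ∀ᶠ n in atTop, f n x < ENNReal.ofReal (q^2*b) :=
      eventually_lt_of_limsup_lt hhi
    obtain ⟨N, hN⟩ := (hev1.and hev2).exists_forall_of_atTop
    exact ⟨N, fun k hk => hN k hk⟩
  have hAN : ∃ N, μ (A i j ∩ cA N) ≠ 0 := by
    by_contra h
    push_neg at h
    apply hApos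
    have hsub : A i j ⊆ ⋃ N, (A i j ∩ cA N) := by
      intro x hx
      obtain ⟨N, hN⟩ := hwindow x hx
      exact mem_iUnion.mpr ⟨N, hx, hN⟩
    exact measure_mono_null hsub (measure_iUnion_null h)
  obtain ⟨N, hGpos⟩ := hAN
  set G := cA N with hGdef
  have hGmeas : MeasurableSet G := by
    have : G = ⋂ k, ⋂ _ : N ≤ k, ({x | ENNReal.ofReal (a/q) < f k x} ∩
        {x | f k x < ENNReal.ofReal (q^2*b)}) := by
      ext x
      constructor
      · intro h
        simp only [mem_iInter, mem_inter_iff]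
        intro k hk
        exact h k hk
      · intro h k hk
        have h2 := mem_iInter.mp (mem_iInter.mp h k) hk
        exact ⟨h2.1, h2.2⟩
    rw [this]
    refine MeasurableSet.iInter fun k => MeasurableSet.iInter fun _ => ?_
    have hfm : Measurable (f k) := (measurable_measure_cyl μ k).const_mul _
    exact (measurableSet_lt measurable_const hfm).inter
      (measurableSet_lt hfm measurable_const)
  -- density point selection
  have hδ' : (0:ℝ≥0∞) < ENNReal.ofReal δ := ENNReal.ofReal_pos.mpr hδ
  have hEnull := density μ hGmeas hδ'
  have hx₀ : ∃ x₀, x₀ ∈ A i j ∧ x₀ ∈ G ∧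
      ∀ᶠ n in atTop, μ (cyl n x₀ \ G) ≤ ENNReal.ofReal δ * μ (cyl n x₀) := by
    set E := {x | x ∈ G ∧ ∃ᶠ n in atTop,
      ENNReal.ofReal δ * μ (cyl n x) < μ (cyl n x \ G)} with hEdef
    have hne : ((A i j ∩ G) \ E).Nonempty := by
      rw [Set.nonempty_iff_ne_empty]
      intro hemp
      have : A i j ∩ G ⊆ E := by
        intro x hx
        by_contra hxE
        exact (Set.eq_empty_iff_forall_notMem.mp hemp x) ⟨hx, hxE⟩
      exact hGpos (measure_mono_null this hEnull)
    obtain ⟨x₀, ⟨hxA, hxG⟩, hxE⟩ := hne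
    refine ⟨x₀, hxA, hxG, ?_⟩
    have : ¬ ∃ᶠ n in atTop, ENNReal.ofReal δ * μ (cyl n x₀) < μ (cyl n x₀ \ G) := by
      intro hfr
      exact hxE ⟨hxG, hfr⟩
    rw [not_frequently] at this
    filter_upwards [this] with n hn
    exact not_lt.mp hn
  obtain ⟨x₀, hxA, hxG, hxdens⟩ := hx₀
  -- node analysis
  have node : ∀ n : ℕ, N ≤ n →
      μ (cyl n x₀ \ G) ≤ ENNReal.ofReal δ * μ (cyl n x₀) →
      ∃ k : ℕ, (k:ℝ) * (a/q) ≤ β * (β^n * (μ (cyl n x₀)).toReal) ∧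
        (β^n * (μ (cyl n x₀)).toReal) * (1 - m*δ) ≤ (k:ℝ) * (q^2*b) / β := by
    intro n hn hdn
    set C : Fin m → Set (ℕ → Fin m) := fun j => cyl (n+1) (child x₀ n j) with hCdef
    set v : Fin m → ℝ := fun j => (μ (C j)).toReal with hvdef
    set u := (μ (cyl n x₀)).toReal with hudef
    have hu0 : 0 ≤ u := ENNReal.toReal_nonneg
    have hv0 : ∀ j, 0 ≤ v j := fun j => ENNReal.toReal_nonneg
    have husum : u = ∑ j, v j := by
      rw [hudef, measure_cyl_eq_sum μ x₀ n]
      exact ENNReal.toReal_sum fun j _ => measure_ne_top μ _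
    set J := Finset.univ.filter (fun j => (C j ∩ G).Nonempty) with hJdef
    set k := J.card with hkdef
    have hP : (0:ℝ) < β ^ n := pow_pos hβ0 n
    have hP1 : (0:ℝ) < β ^ (n+1) := pow_pos hβ0 (n+1)
    have hJlo : ∀ j ∈ J, a/q ≤ β^(n+1) * v j ∧ β^(n+1) * v j ≤ q^2*b := by
      intro j hj
      obtain ⟨y, hyC, hyG⟩ := (Finset.mem_filter.mp hj).2
      have hCy : cyl (n+1) y = C j := cyl_eq_of_mem hyC
      have hy := hyG (n+1) (le_trans hn (Nat.le_succ n))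
      constructor
      · have := hfgt (by positivity) hy.1
        rw [hCy] at this
        exact this.le
      · have := hflt hy.2
        rw [hCy] at this
        exact this.le
    have hJc : ∀ j ∉ J, v j ≤ δ * u := by
      intro j hj
      have hempty : C j ∩ G = ∅ := by
        by_contra hne
        exact hj (Finset.mem_filter.mpr ⟨Finset.mem_univ j,
          Set.nonempty_iff_ne_empty.mpr hne⟩)
      have hsub : C j ⊆ cyl n x₀ \ G := by
        intro y hy
        refine ⟨child_subset hy, fun hyG => ?_⟩
        exact absurd (Set.mem_inter hy hyG) (by rw [hempty]; exact notMem_empty y)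
      have h1 : μ (C j) ≤ ENNReal.ofReal δ * μ (cyl n x₀) :=
        le_trans (measure_mono hsub) hdn
      have h2 : ENNReal.ofReal δ * μ (cyl n x₀) = ENNReal.ofReal (δ * u) := by
        rw [hudef, ← ENNReal.ofReal_toReal (measure_ne_top μ (cyl n x₀)),
          ← ENNReal.ofReal_mul hδ.le, ENNReal.ofReal_toReal (measure_ne_top μ (cyl n x₀))]
      rw [h2] at h1
      calc v j = (μ (C j)).toReal := rfl
        _ ≤ (ENNReal.ofReal (δ * u)).toReal := ENNReal.toReal_mono ENNReal.ofReal_ne_top h1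
        _ = δ * u := ENNReal.toReal_ofReal (by positivity)
    refine ⟨k, ?_, ?_⟩
    · -- lower bound: k * (a/q) ≤ β^(n+1) * u
      have hsumJ : (k:ℝ) * ((a/q) / β^(n+1)) ≤ ∑ j ∈ J, v j := by
        rw [hkdef]
        have hlow : ∀ j ∈ J, (a/q) / β^(n+1) ≤ v j := by
          intro j hj
          rw [div_le_iff₀ hP1]
          nlinarith [(hJlo j hj).1]
        have := Finset.card_nsmul_le_sum J v ((a/q) / β^(n+1)) hlow
        simpa [nsmul_eq_mul] using this
      have hsub : ∑ j ∈ J, v j ≤ u := by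
        rw [husum]
        exact Finset.sum_le_sum_of_subset_of_nonneg (Finset.subset_univ J)
          (fun j _ _ => hv0 j)
      have h3 : (k:ℝ) * ((a/q) / β^(n+1)) ≤ u := le_trans hsumJ hsub
      have h4 : (k:ℝ) * (a/q) ≤ β^(n+1) * u := by
        rw [← mul_div_assoc, div_le_iff₀ hP1] at h3
        linarith
      rw [pow_succ] at h4
      calc (k:ℝ) * (a/q) ≤ β^n * β * u := h4
        _ = β * (β^n * u) := by ring
    · -- upper bound
      have hsumJ : ∑ j ∈ J, v j ≤ (k:ℝ) * ((q^2*b) / β^(n+1)) := by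
        rw [hkdef]
        have := Finset.sum_le_card_nsmul J v ((q^2*b) / β^(n+1)) (fun j hj => by
          rw [le_div_iff₀ hP1]
          linarith [(hJlo j hj).2])
        simpa [nsmul_eq_mul] using this
      have hsumJc : ∑ j ∈ Finset.univ.filter (fun j => ¬ (C j ∩ G).Nonempty), v j
          ≤ (m:ℝ) * (δ * u) := by
        have h5 := Finset.sum_le_card_nsmul
          (Finset.univ.filter (fun j => ¬ (C j ∩ G).Nonempty)) v (δ * u)
          (fun j hj => hJc j (by
            intro hjJ
            exact (Finset.mem_filter.mp hj).2 (Finset.mem_filter.mp hjJ).2))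
        have hcard : ((Finset.univ.filter (fun j => ¬ (C j ∩ G).Nonempty)).card : ℝ)
            ≤ (m:ℝ) := by
          have := Finset.card_filter_le (Finset.univ : Finset (Fin m))
            (fun j => ¬ (C j ∩ G).Nonempty)
          simp only [Finset.card_univ, Fintype.card_fin] at this
          exact_mod_cast this
        calc ∑ j ∈ Finset.univ.filter (fun j => ¬ (C j ∩ G).Nonempty), v j
            ≤ ((Finset.univ.filter (fun j => ¬ (C j ∩ G).Nonempty)).card : ℝ) * (δ * u) := by
              simpa [nsmul_eq_mul] using h5
          _ ≤ (m:ℝ) * (δ * u) := by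
              apply mul_le_mul_of_nonneg_right hcard (by positivity)
      have husplit : u = ∑ j ∈ J, v j +
          ∑ j ∈ Finset.univ.filter (fun j => ¬ (C j ∩ G).Nonempty), v j := by
        rw [husum, hJdef]
        exact (Finset.sum_filter_add_sum_filter_not Finset.univ _ v).symm
      have h6 : u * (1 - m*δ) ≤ (k:ℝ) * (q^2*b) / β^(n+1) := by
        have : u ≤ (k:ℝ) * ((q^2*b) / β^(n+1)) + (m:ℝ) * (δ * u) := by
          conv_lhs => rw [husplit]
          exact add_le_add hsumJ hsumJc
        rw [mul_div_assoc]
        nlinarith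
      calc (β^n * u) * (1 - m*δ) = (u * (1 - m*δ)) * β^n := by ring
        _ ≤ ((k:ℝ) * (q^2*b) / β^(n+1)) * β^n := by
            apply mul_le_mul_of_nonneg_right h6 hP.le
        _ = (k:ℝ) * (q^2*b) / β := by
            rw [pow_succ]
            field_simp
            ring
  -- x₀ window facts
  obtain ⟨hxΩ, ⟨hs1, hs2⟩, ⟨hS1, hS2⟩⟩ := hxA
  obtain ⟨hsnt, hSnt, _, _⟩ := hΩbounds x₀ hxΩ
  -- liminf time
  have hliminf_lt : liminf (fun n => f n x₀) atTop < ENNReal.ofReal (q^2*a) := by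
    rw [← hθL x₀]
    calc thetaLower μ α x₀ = ENNReal.ofReal (thetaLower μ α x₀).toReal :=
          (ENNReal.ofReal_toReal hsnt).symm
      _ < ENNReal.ofReal (q^2*a) := by
          apply ENNReal.ofReal_lt_ofReal_iff (by positivity) |>.mpr
          rw [hqa] at hs2
          nlinarith
  have hfreq1 : ∃ᶠ n in atTop, f n x₀ < ENNReal.ofReal (q^2*a) :=
    frequently_lt_of_liminf_lt (h := hliminf_lt)
  have hlimsup_gt : ENNReal.ofReal (b/q) < limsup (fun n => f n x₀) atTop := by
    rw [← hθU x₀]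
    calc ENNReal.ofReal (b/q) < ENNReal.ofReal b := by
          apply ENNReal.ofReal_lt_ofReal_iff hb |>.mpr
          rw [div_lt_iff₀ hq0]; nlinarith
      _ ≤ ENNReal.ofReal (thetaUpper μ α x₀).toReal := ENNReal.ofReal_le_ofReal hS1
      _ = thetaUpper μ α x₀ := ENNReal.ofReal_toReal hSnt
  have hfreq2 : ∃ᶠ n in atTop, ENNReal.ofReal (b/q) < f n x₀ :=
    frequently_lt_of_lt_limsup (h := hlimsup_gt)
  have hev : ∀ᶠ n in atTop, N ≤ n ∧
      μ (cyl n x₀ \ G) ≤ ENNReal.ofReal δ * μ (cyl n x₀) :=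
    (eventually_ge_atTop N).and hxdens
  obtain ⟨n₁, hn₁lt, hn₁N, hn₁d⟩ := (hfreq1.and_eventually hev).exists
  obtain ⟨n₂, hn₂gt, hn₂N, hn₂d⟩ := (hfreq2.and_eventually hev).exists
  obtain ⟨k₁, hk₁a, hk₁b⟩ := node n₁ hn₁N hn₁d
  obtain ⟨k₂, hk₂a, hk₂b⟩ := node n₂ hn₂N hn₂d
  -- the L bound
  have hLbound : ENNReal.ofReal (b / (q * a)) ≤ L := by
    rcases eq_or_ne L ⊤ with hLt | hLt
    · rw [hLt]; exact le_top
    have h1 : ENNReal.ofReal b ≤ L * ENNReal.ofReal (q*a) := by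
      calc ENNReal.ofReal b ≤ ENNReal.ofReal (thetaUpper μ α x₀).toReal :=
            ENNReal.ofReal_le_ofReal hS1
        _ = thetaUpper μ α x₀ := ENNReal.ofReal_toReal hSnt
        _ ≤ L * thetaLower μ α x₀ := hxΩ.2.2
        _ ≤ L * ENNReal.ofReal (q*a) := by
            apply mul_le_mul_right
            calc thetaLower μ α x₀ = ENNReal.ofReal (thetaLower μ α x₀).toReal :=
                  (ENNReal.ofReal_toReal hsnt).symm
              _ ≤ ENNReal.ofReal (q*a) := by
                  apply ENNReal.ofReal_le_ofReal
                  rw [hqa] at hs2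
                  nlinarith
    rw [ENNReal.ofReal_div_of_pos (by positivity)]
    rw [ENNReal.div_le_iff (by simp [ENNReal.ofReal_pos]; positivity)
      ENNReal.ofReal_ne_top]
    exact h1
  -- finish: get real bounds at the two times
  have hX₁lo : a/q ≤ β^n₁ * (μ (cyl n₁ x₀)).toReal :=
    (hfgt (by positivity) ((hxG n₁ hn₁N).1)).le
  have hX₁hi : β^n₁ * (μ (cyl n₁ x₀)).toReal ≤ q^2*a := (hflt hn₁lt).le
  have hX₂lo : b/q ≤ β^n₂ * (μ (cyl n₂ x₀)).toReal :=
    (hfgt (by positivity) hn₂gt).le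
  have hX₂hi : β^n₂ * (μ (cyl n₂ x₀)).toReal ≤ q^2*b := (hflt ((hxG n₂ hn₂N).2)).le
  refine ⟨a, b, ha, hb, hLbound, k₁, k₂, ?_, ?_, ?_, ?_⟩
  · calc (k₁:ℝ) * (a/q) ≤ β * (β^n₁ * (μ (cyl n₁ x₀)).toReal) := hk₁a
      _ ≤ β * (q^2*a) := by apply mul_le_mul_of_nonneg_left hX₁hi hβ0.le
  · calc a/q * (1 - m*δ) ≤ (β^n₁ * (μ (cyl n₁ x₀)).toReal) * (1 - m*δ) := by
          apply mul_le_mul_of_nonneg_right hX₁lo hmδ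
      _ ≤ (k₁:ℝ) * (q^2*b) / β := hk₁b
  · calc b/q * (1 - m*δ) ≤ (β^n₂ * (μ (cyl n₂ x₀)).toReal) * (1 - m*δ) := by
          apply mul_le_mul_of_nonneg_right hX₂lo hmδ
      _ ≤ (k₂:ℝ) * (q^2*b) / β := hk₂b
  · calc (k₂:ℝ) * (a/q) ≤ β * (β^n₂ * (μ (cyl n₂ x₀)).toReal) := hk₂a
      _ ≤ β * (q^2*b) := by apply mul_le_mul_of_nonneg_left hX₂hi hβ0.le


lemma ofReal_le_of_forall_lt {t : ℝ} {L : ℝ≥0∞}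
    (h : ∀ r : ℝ, 0 < r → r < t → ENNReal.ofReal r ≤ L) :
    ENNReal.ofReal t ≤ L := by
  rcases le_or_gt t 0 with ht | ht
  · simp [ENNReal.ofReal_eq_zero.mpr ht]
  by_contra hc
  push_neg at hc
  have hLt : L ≠ ⊤ := hc.trans_le le_top |>.ne
  have h1 : L.toReal < t := (ENNReal.lt_ofReal_iff_toReal_lt hLt).mp hc
  set r := (max L.toReal 0 + t) / 2 with hr
  have h2 : max L.toReal 0 < t := by
    rcases max_cases L.toReal 0 with ⟨he, _⟩ | ⟨he, _⟩ <;> rw [he] <;> linarith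
  have hr0 : 0 < r := by
    have := le_max_right L.toReal 0
    rw [hr]; linarith
  have hrt : r < t := by rw [hr]; linarith
  have h3 : ENNReal.ofReal r ≤ L := h r hr0 hrt
  have h4 : r ≤ L.toReal := by
    rw [← ENNReal.ofReal_le_iff_le_toReal hLt]
    exact h3
  have := le_max_left L.toReal 0
  rw [hr] at h4
  linarith


end CylAux

set_option maxHeartbeats 2000000 in
open CylAux in
theorem marstrand_lower_bound (m : ℕ) (hm : 2 ≤ m) (α : ℝ)
    (hα : α ∈ Set.Ioo (0 : ℝ) 1) (μ : Measure (ℕ → Fin m)) [IsFiniteMeasure μ]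
    (hμ : μ ≠ 0)
    (hae : ∀ᵐ x ∂μ, thetaUpper μ α x < ⊤ ∧ 0 < thetaLower μ α x) :
    ENNReal.ofReal (max ((m : ℝ) ^ α / (⌊(m : ℝ) ^ α⌋₊ : ℝ))
        ((⌈(m : ℝ) ^ α⌉₊ : ℝ) / (m : ℝ) ^ α)) ≤
      essSup (fun x => thetaUpper μ α x / thetaLower μ α x) μ := by
  obtain ⟨hα0, hα1⟩ := hα
  have hm1 : (1:ℝ) < m := by
    have : (2:ℝ) ≤ m := by exact_mod_cast hm
    linarith
  have hm0 : (m:ℝ) ≠ 0 := by linarith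
  set β := (m:ℝ) ^ α with hβdef
  have hβ1 : 1 < β := Real.one_lt_rpow_iff_of_pos (by linarith) |>.mpr (Or.inl ⟨hm1, hα0⟩)
  have hβ0 : 0 < β := lt_trans one_pos hβ1
  set F := (⌊β⌋₊ : ℝ) with hFdef
  set C := (⌈β⌉₊ : ℝ) with hCdef
  have hF1 : 1 ≤ F := by
    rw [hFdef]
    exact_mod_cast Nat.le_floor (by exact_mod_cast hβ1.le : ((1:ℕ):ℝ) ≤ β)
  have hF0 : 0 < F := lt_of_lt_of_le one_pos hF1
  have hFle : F ≤ β := Nat.floor_le hβ0.le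
  have hFgt : β < F + 1 := Nat.lt_floor_add_one β
  have hCge : β ≤ C := Nat.le_ceil β
  have hClt : C < β + 1 := Nat.ceil_lt_add_one hβ0.le
  set L := essSup (fun x => thetaUpper μ α x / thetaLower μ α x) μ with hL
  -- first bound : β / F
  have H1 : ENNReal.ofReal (β / F) ≤ L := by
    apply ofReal_le_of_forall_lt
    intro r hr0 hrt
    have hφ : Tendsto (fun t : ℝ => β * (2 - t) / (t^4 * F)) (𝓝[>] 1) (𝓝 (β / F)) := by
      have hc : ContinuousAt (fun t : ℝ => β * (2 - t) / (t^4 * F)) 1 := by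
        apply ContinuousAt.div (by fun_prop) (by fun_prop)
        norm_num
        exact hF0.ne'
      have h := hc.tendsto.mono_left (nhdsWithin_le_nhds (s := Ioi (1:ℝ)))
      norm_num at h
      exact h
    have hψ : Tendsto (fun t : ℝ => β * t^3) (𝓝[>] 1) (𝓝 β) := by
      have hc : ContinuousAt (fun t : ℝ => β * t^3) 1 := by fun_prop
      have h := hc.tendsto.mono_left (nhdsWithin_le_nhds (s := Ioi (1:ℝ)))
      norm_num at h
      exact h
    have hev1 : ∀ᶠ t in 𝓝[>] (1:ℝ), r < β * (2 - t) / (t^4 * F) :=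
      hφ.eventually (eventually_gt_nhds hrt)
    have hev2 : ∀ᶠ t in 𝓝[>] (1:ℝ), β * t^3 < F + 1 :=
      hψ.eventually (eventually_lt_nhds (by linarith))
    have hev3 : ∀ᶠ t in 𝓝[>] (1:ℝ), t < 2 :=
      (eventually_lt_nhds (by norm_num : (1:ℝ) < 2)).filter_mono nhdsWithin_le_nhds
    have hev4 : ∀ᶠ t in 𝓝[>] (1:ℝ), 1 < t := eventually_mem_nhdsWithin
    obtain ⟨t, hrφ, hψt, ht2, ht1⟩ := (hev1.and (hev2.and (hev3.and hev4))).exists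
    have ht0 : (0:ℝ) < t := by linarith
    have h2t0 : (0:ℝ) < 2 - t := by linarith
    have hδ0 : 0 < (t - 1) / m := div_pos (by linarith) (by linarith)
    have hmδ : (m:ℝ) * ((t - 1) / m) = t - 1 := by field_simp
    have hmδ1 : (m:ℝ) * ((t - 1) / m) < 1 := by rw [hmδ]; linarith
    obtain ⟨a, b, ha, hb, hLb, k₁, k₂, e1, e2, e3, e4⟩ :=
      engine m hm α ⟨hα0, hα1⟩ μ hμ hae ht1 hδ0 hmδ1
    rw [hmδ] at e2
    have h2teq : (1:ℝ) - (t - 1) = 2 - t := by ring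
    rw [h2teq] at e2
    -- k₁ ≤ F
    have hk₁ : (k₁:ℝ) ≤ F := by
      have h6 : (k₁:ℝ) ≤ β * t^3 := by
        by_contra h7
        push_neg at h7
        have haq : 0 < a / t := div_pos ha ht0
        have h8 : β * t^3 * (a/t) < (k₁:ℝ) * (a/t) :=
          mul_lt_mul_of_pos_right h7 haq
        have h9 : β * t^3 * (a/t) = β * (t^2 * a) := by
          field_simp
          try ring
        rw [h9] at h8
        linarith [e1]
      have h8 : (k₁:ℝ) < F + 1 := lt_of_le_of_lt h6 hψt
      have h9 : k₁ < ⌊β⌋₊ + 1 := by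
        rw [hFdef] at h8
        exact_mod_cast h8
      have h10 : k₁ ≤ ⌊β⌋₊ := Nat.lt_succ_iff.mp h9
      rw [hFdef]
      exact_mod_cast h10
    -- conclude r ≤ b / (t * a)
    have e2' : a/t*(2-t)*β ≤ (k₁:ℝ)*(t^2*b) := (le_div_iff₀ hβ0).mp e2
    have e2'' : a/t*(2-t)*β ≤ F*(t^2*b) :=
      le_trans e2' (mul_le_mul_of_nonneg_right hk₁ (by positivity))
    have hrr : r * (t^4*F) ≤ β*(2-t) := by
      rw [← le_div_iff₀ (by positivity)]
      exact hrφ.le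
    have e2m : a*(2-t)*β ≤ F*(t^2*b)*t := by
      have := mul_le_mul_of_nonneg_right e2'' ht0.le
      have hat : a/t*(2-t)*β*t = a*(2-t)*β := by
        field_simp
        try ring
      linarith [hat ▸ this]
    have key : r * (t*a) * (t^3*F) ≤ b * (t^3*F) := by
      nlinarith [mul_le_mul_of_nonneg_right hrr ha.le, e2m]
    have hfin : r ≤ b / (t*a) := by
      rw [le_div_iff₀ (by positivity)]
      exact le_of_mul_le_mul_right key (by positivity)
    exact le_trans (ENNReal.ofReal_le_ofReal hfin) hLb
  -- second bound : C / β
  have H2 : ENNReal.ofReal (C / β) ≤ L := by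
    apply ofReal_le_of_forall_lt
    intro r hr0 hrt
    have hφ : Tendsto (fun t : ℝ => C / (β * t^4)) (𝓝[>] 1) (𝓝 (C / β)) := by
      have hc : ContinuousAt (fun t : ℝ => C / (β * t^4)) 1 := by
        apply ContinuousAt.div (by fun_prop) (by fun_prop)
        norm_num
        exact hβ0.ne'
      have h := hc.tendsto.mono_left (nhdsWithin_le_nhds (s := Ioi (1:ℝ)))
      norm_num at h
      exact h
    have hψ : Tendsto (fun t : ℝ => β * (2 - t) / t^3) (𝓝[>] 1) (𝓝 β) := by
      have hc : ContinuousAt (fun t : ℝ => β * (2 - t) / t^3) 1 := by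
        apply ContinuousAt.div (by fun_prop) (by fun_prop)
        norm_num
      have h := hc.tendsto.mono_left (nhdsWithin_le_nhds (s := Ioi (1:ℝ)))
      norm_num at h
      exact h
    have hev1 : ∀ᶠ t in 𝓝[>] (1:ℝ), r < C / (β * t^4) :=
      hφ.eventually (eventually_gt_nhds hrt)
    have hev2 : ∀ᶠ t in 𝓝[>] (1:ℝ), C - 1 < β * (2 - t) / t^3 :=
      hψ.eventually (eventually_gt_nhds (by linarith))
    have hev3 : ∀ᶠ t in 𝓝[>] (1:ℝ), t < 2 :=
      (eventually_lt_nhds (by norm_num : (1:ℝ) < 2)).filter_mono nhdsWithin_le_nhds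
    have hev4 : ∀ᶠ t in 𝓝[>] (1:ℝ), 1 < t := eventually_mem_nhdsWithin
    obtain ⟨t, hrφ, hψt, ht2, ht1⟩ := (hev1.and (hev2.and (hev3.and hev4))).exists
    have ht0 : (0:ℝ) < t := by linarith
    have h2t0 : (0:ℝ) < 2 - t := by linarith
    have hδ0 : 0 < (t - 1) / m := div_pos (by linarith) (by linarith)
    have hmδ : (m:ℝ) * ((t - 1) / m) = t - 1 := by field_simp
    have hmδ1 : (m:ℝ) * ((t - 1) / m) < 1 := by rw [hmδ]; linarith
    obtain ⟨a, b, ha, hb, hLb, k₁, k₂, e1, e2, e3, e4⟩ :=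
      engine m hm α ⟨hα0, hα1⟩ μ hμ hae ht1 hδ0 hmδ1
    rw [hmδ] at e3
    have h2teq : (1:ℝ) - (t - 1) = 2 - t := by ring
    rw [h2teq] at e3
    -- k₂ ≥ C
    have hk₂ : C ≤ (k₂:ℝ) := by
      have e3' : b/t*(2-t)*β ≤ (k₂:ℝ)*(t^2*b) := (le_div_iff₀ hβ0).mp e3
      have h6 : β * (2-t) / t^3 ≤ (k₂:ℝ) := by
        rw [div_le_iff₀ (by positivity)]
        have hbt : b/t*(2-t)*β*t = b*(2-t)*β := by
          field_simp
          try ring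
        have := mul_le_mul_of_nonneg_right e3' ht0.le
        rw [hbt] at this
        nlinarith
      have h7 : C - 1 < (k₂:ℝ) := lt_of_lt_of_le hψt h6
      have h8 : ⌈β⌉₊ < k₂ + 1 := by
        rw [hCdef] at h7
        exact_mod_cast (by linarith : (⌈β⌉₊:ℝ) < (k₂:ℝ) + 1)
      have h9 : ⌈β⌉₊ ≤ k₂ := Nat.lt_succ_iff.mp h8
      rw [hCdef]
      exact_mod_cast h9
    -- conclude
    have e4' : C * (a/t) ≤ β*(t^2*b) :=
      le_trans (mul_le_mul_of_nonneg_right hk₂ (by positivity)) e4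
    have hrr : r * (β * t^4) ≤ C := by
      rw [← le_div_iff₀ (by positivity)]
      exact hrφ.le
    have e4m : C * a ≤ β*(t^2*b)*t := by
      have := mul_le_mul_of_nonneg_right e4' ht0.le
      have hat : C * (a/t) * t = C * a := by
        field_simp
      linarith [hat ▸ this]
    have key : r * (t*a) * (β*t^3) ≤ b * (β*t^3) := by
      nlinarith [mul_le_mul_of_nonneg_right hrr ha.le, e4m]
    have hfin : r ≤ b / (t*a) := by
      rw [le_div_iff₀ (by positivity)]
      exact le_of_mul_le_mul_right key (by positivity)
    exact le_trans (ENNReal.ofReal_le_ofReal hfin) hLb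
  -- combine
  rcases le_total (β / F) (C / β) with h | h
  · rw [max_eq_right h]
    exact H2
  · rw [max_eq_left h]
    exact H1
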